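/- The 4×4 real transfer matrix T(μ) of the S=1 asymmetric VBS state has characteristic polynomial (X − λ₊(μ))·(X − λ₋(μ))·(X + μ/2)²; in particular, its eigenvalues are λ₊(μ) and λ₋(μ), each simple, and λ₀(μ) = −μ/2 with algebraic multiplicity two. This holds for every μ ∈ [0,1]. -/

import Mathlib

open Matrix Kronecker Polynomial

/-- Explicit formula for the determinant of a 4×4 matrix. -/
theorem det_fin_four' {R : Type*} [CommRing R] (A : Matrix (Fin 4) (Fin 4) R) : A.det =
    A 0 0 * (A 1 1 * (A 2 2 * A 3 3 - A 2 3 * A 3 2) - A 1 2 * (A 2 1 * A 3 3 - A 2 3 * A 3 1)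
      + A 1 3 * (A 2 1 * A 3 2 - A 2 2 * A 3 1))
  - A 0 1 * (A 1 0 * (A 2 2 * A 3 3 - A 2 3 * A 3 2) - A 1 2 * (A 2 0 * A 3 3 - A 2 3 * A 3 0)
      + A 1 3 * (A 2 0 * A 3 2 - A 2 2 * A 3 0))
  + A 0 2 * (A 1 0 * (A 2 1 * A 3 3 - A 2 3 * A 3 1) - A 1 1 * (A 2 0 * A 3 3 - A 2 3 * A 3 0)
      + A 1 3 * (A 2 0 * A 3 1 - A 2 1 * A 3 0))
  - A 0 3 * (A 1 0 * (A 2 1 * A 3 2 - A 2 2 * A 3 1) - A 1 1 * (A 2 0 * A 3 2 - A 2 2 * A 3 0)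
      + A 1 2 * (A 2 0 * A 3 1 - A 2 1 * A 3 0)) := by
  rw [Matrix.det_succ_row_zero, Fin.sum_univ_four]
  simp [Matrix.det_succ_row_zero, Fin.sum_univ_succ, Fin.succAbove, Matrix.submatrix]
  ring

/-- The matrix `A⁽¹⁾` of the S=1 asymmetric VBS state. -/
noncomputable def A1 (μ : ℝ) : Matrix (Fin 2) (Fin 2) ℝ := !![0, 0; -Real.sqrt μ, 0]

/-- The matrix `A⁽⁰⁾` of the S=1 asymmetric VBS state. -/
noncomputable def A0 (μ : ℝ) : Matrix (Fin 2) (Fin 2) ℝ :=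
  (1 / Real.sqrt 2) • !![1, 0; 0, -μ]

/-- The matrix `A⁽⁻¹⁾` of the S=1 asymmetric VBS state. -/
noncomputable def Am1 (μ : ℝ) : Matrix (Fin 2) (Fin 2) ℝ := !![0, Real.sqrt μ; 0, 0]

/-- The transfer matrix `T(μ)` of the S=1 asymmetric VBS state. -/
noncomputable def T (μ : ℝ) : Matrix (Fin 2 × Fin 2) (Fin 2 × Fin 2) ℝ :=
  A1 μ ⊗ₖ A1 μ + A0 μ ⊗ₖ A0 μ + Am1 μ ⊗ₖ Am1 μ

/-- The eigenvalue `λ₊(μ)`. -/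
noncomputable def lamP (μ : ℝ) : ℝ := (μ ^ 2 + 1 + Real.sqrt (μ ^ 4 + 14 * μ ^ 2 + 1)) / 4

/-- The eigenvalue `λ₋(μ)`. -/
noncomputable def lamM (μ : ℝ) : ℝ := (μ ^ 2 + 1 - Real.sqrt (μ ^ 4 + 14 * μ ^ 2 + 1)) / 4

/-- The transfer matrix written explicitly as a 4×4 matrix. -/
noncomputable def Mmat (μ : ℝ) : Matrix (Fin 4) (Fin 4) ℝ :=
  !![1/2, 0, 0, μ; 0, -μ/2, 0, 0; 0, 0, -μ/2, 0; μ, 0, 0, μ^2/2]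

/-- `T μ` is a reindexing of the explicit 4×4 matrix `Mmat μ`. -/
theorem T_eq_reindex (μ : ℝ) (hμ : μ ∈ Set.Icc (0:ℝ) 1) :
    T μ = Matrix.reindex (finProdFinEquiv (m := 2) (n := 2)).symm
      (finProdFinEquiv (m := 2) (n := 2)).symm (Mmat μ) := by
  have h2 : (Real.sqrt 2)⁻¹ * (Real.sqrt 2)⁻¹ = 1/2 := by
    rw [← mul_inv, Real.mul_self_sqrt (by norm_num)]; norm_num
  have hm : Real.sqrt μ * Real.sqrt μ = μ := Real.mul_self_sqrt hμ.1
  ext ⟨a,b⟩ ⟨c,d⟩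
  fin_cases a <;> fin_cases b <;> fin_cases c <;> fin_cases d <;>
    norm_num [T, A1, A0, Am1, Mmat, Matrix.kroneckerMap_apply, finProdFinEquiv,
      Matrix.vecHead, Matrix.vecTail, hm] <;>
    first | linear_combination h2 | linear_combination (-μ) * h2 | linear_combination μ^2 * h2

/-- The characteristic polynomial of the explicit 4×4 matrix. -/
theorem charpoly_Mmat (μ : ℝ) :
    (Mmat μ).charpoly = (X - C (lamP μ)) * (X - C (lamM μ)) * (X + C (μ/2))^2 := by
  have hs : Real.sqrt (μ^4+14*μ^2+1) ^ 2 = μ^4+14*μ^2+1 := Real.sq_sqrt (by positivity)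
  apply Polynomial.funext
  intro x
  rw [Matrix.charpoly, det_fin_four']
  set s := Real.sqrt (μ^4+14*μ^2+1) with hsdef
  simp [charmatrix_apply, Mmat, lamP, lamM, Matrix.vecHead, Matrix.vecTail]
  linear_combination ((x + μ/2)^2/16) * hs

/-- The characteristic polynomial of the S=1 transfer matrix `T(μ)` is
`(X − λ₊(μ))·(X − λ₋(μ))·(X + μ/2)²`, so its eigenvalues are `λ₊(μ)`, `λ₋(μ)`
(each simple) and `λ₀(μ) = −μ/2` with algebraic multiplicity two, for every `μ ∈ [0,1]`. -/
theorem charpoly_transfer_S1 (μ : ℝ) (hμ : μ ∈ Set.Icc (0 : ℝ) 1) :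
    (T μ).charpoly =
      (X - C (lamP μ)) * (X - C (lamM μ)) * (X + C (μ / 2)) ^ 2 := by
  rw [T_eq_reindex μ hμ, Matrix.charpoly_reindex, charpoly_Mmat]
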